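/- Let R be a commutative refinement ring and let M and N be finitely generated projective R-modules. Then M and N are isomorphic as R-modules if and only if for every prime ideal P of R, the localized modules M_P and N_P are isomorphic as modules over the localization R_P. -/

import Mathlib

universe u

/-- A commutative ring `R` is a *refinement ring* if the monoid of finitely generated
projective `R`-modules has the refinement property: whenever `A ⊕ B ≅ C ⊕ D` for finitely
generated projective modules `A, B, C, D`, there are finitely generated projective modules
`E₁₁, E₁₂, E₂₁, E₂₂` with `A ≅ E₁₁ ⊕ E₁₂`, `B ≅ E₂₁ ⊕ E₂₂`, `C ≅ E₁₁ ⊕ E₂₁`,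
`D ≅ E₁₂ ⊕ E₂₂`. -/
def IsRefinementRing (R : Type u) [Ring R] : Prop :=
  ∀ A B C D : ModuleCat.{u} R,
    Module.Finite R A → Module.Projective R A →
    Module.Finite R B → Module.Projective R B →
    Module.Finite R C → Module.Projective R C →
    Module.Finite R D → Module.Projective R D →
    Nonempty ((A × B) ≃ₗ[R] (C × D)) →
    ∃ E₁₁ E₁₂ E₂₁ E₂₂ : ModuleCat.{u} R,
      (Module.Finite R E₁₁ ∧ Module.Projective R E₁₁) ∧
      (Module.Finite R E₁₂ ∧ Module.Projective R E₁₂) ∧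
      (Module.Finite R E₂₁ ∧ Module.Projective R E₂₁) ∧
      (Module.Finite R E₂₂ ∧ Module.Projective R E₂₂) ∧
      Nonempty (A ≃ₗ[R] (E₁₁ × E₁₂)) ∧
      Nonempty (B ≃ₗ[R] (E₂₁ × E₂₂)) ∧
      Nonempty (C ≃ₗ[R] (E₁₁ × E₂₁)) ∧
      Nonempty (D ≃ₗ[R] (E₁₂ × E₂₂))



open LinearMap in
/-- Linear version of `Equiv.piFinSucc`. -/
noncomputable def piSplit (R : Type*) [CommRing R] (n : ℕ) :
    (Fin (n + 1) → R) ≃ₗ[R] R × (Fin n → R) :=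
  LinearEquiv.ofLinear
    (LinearMap.prod (LinearMap.proj 0) (LinearMap.pi fun i => LinearMap.proj i.succ))
    (LinearMap.pi fun i => Fin.cases (LinearMap.fst R R (Fin n → R))
      (fun j => (LinearMap.proj j).comp (LinearMap.snd R R (Fin n → R))) i)
    (by
      apply LinearMap.ext; intro p
      refine Prod.ext ?_ (funext fun j => ?_) <;> simp)
    (by
      apply LinearMap.ext; intro x
      funext i
      induction i using Fin.cases <;> simp)

section Idem

variable {R : Type u} [CommRing R]

/-- `f ≤ e` for idempotents. -/
def iord (e f : R) : Prop := e * f = f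

lemma iord_trans {e f g : R} (h1 : iord e f) (h2 : iord f g) : iord e g := by
  unfold iord at *; rw [← h2, ← mul_assoc, h1]

lemma iord_refl {e : R} (he : IsIdempotentElem e) : iord e e := he

def isup (e f : R) : R := e + f - e * f

lemma isup_idem {e f : R} (he : IsIdempotentElem e) (hf : IsIdempotentElem f) :
    IsIdempotentElem (isup e f) := he.add_sub_mul hf

lemma imul_idem {e f : R} (he : IsIdempotentElem e) (hf : IsIdempotentElem f) :
    IsIdempotentElem (e * f) := he.mul_of_commute (mul_comm e f) hf

lemma iord_isup_left {e f : R} (he : IsIdempotentElem e) : iord (isup e f) e := by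
  have he : e * e = e := he
  unfold iord isup; linear_combination (1 - f) * he

lemma iord_isup_right {e f : R} (hf : IsIdempotentElem f) : iord (isup e f) f := by
  have hf : f * f = f := hf
  unfold iord isup; linear_combination (1 - e) * hf

lemma iord_isup_lub {a e f : R} (h1 : iord a e) (h2 : iord a f) : iord a (isup e f) := by
  unfold iord isup at *; linear_combination (1 - f) * h1 + h2

lemma iord_imul_left {e f : R} (he : IsIdempotentElem e) : iord e (e * f) := by
  have he : e * e = e := he
  unfold iord; linear_combination f * he

lemma iord_imul_right {e f : R} (hf : IsIdempotentElem f) : iord f (e * f) := by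
  have hf : f * f = f := hf
  unfold iord; linear_combination e * hf

lemma iord_zero (e : R) : iord e 0 := mul_zero e

lemma mem_span_idem {e : R} (he : IsIdempotentElem e) {x : R} :
    x ∈ Ideal.span ({e} : Set R) ↔ e * x = x := by
  rw [Ideal.mem_span_singleton]
  constructor
  · rintro ⟨c, rfl⟩; rw [← mul_assoc, he]
  · intro h; exact ⟨x, h.symm⟩

end Idem


section Swap

variable {R : Type u} [CommRing R]

/-- The refinement/swap isomorphism `eR ⊕ fR ≅ (e∨f)R ⊕ (ef)R`. -/
noncomputable def swapEquiv {e f : R} (he : IsIdempotentElem e) (hf : IsIdempotentElem f) :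
    (↥(Ideal.span ({e} : Set R)) × ↥(Ideal.span ({f} : Set R))) ≃ₗ[R]
      (↥(Ideal.span ({e + f - e * f} : Set R)) × ↥(Ideal.span ({e * f} : Set R))) where
  toFun p :=
    (⟨(p.2 : R) + (p.1 : R) - f * (p.1 : R), by
        have hx : e * (p.1 : R) = p.1 := (mem_span_idem he).1 p.1.2
        have hy : f * (p.2 : R) = p.2 := (mem_span_idem hf).1 p.2.2
        have he' : e * e = e := he
        have hf' : f * f = f := hf
        refine (mem_span_idem (he.add_sub_mul hf)).2 ?_
        linear_combination (1 - e) * hy + (1 - f) * hx - ((1 - e) * (p.1 : R)) * hf'⟩,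
     ⟨f * (p.1 : R), by
        have hx : e * (p.1 : R) = p.1 := (mem_span_idem he).1 p.1.2
        have hf' : f * f = f := hf
        refine (mem_span_idem (imul_idem he hf)).2 ?_
        linear_combination f * hx + (e * (p.1 : R)) * hf'⟩)
  invFun q :=
    (⟨(q.1 : R) - f * (q.1 : R) + (q.2 : R), by
        have hu : (e + f - e * f) * (q.1 : R) = q.1 := (mem_span_idem (he.add_sub_mul hf)).1 q.1.2
        have hv : (e * f) * (q.2 : R) = q.2 := (mem_span_idem (imul_idem he hf)).1 q.2.2
        have he' : e * e = e := he
        have hf' : f * f = f := hf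
        refine (mem_span_idem he).2 ?_
        linear_combination (1 - f) * hu + ((1 - e) * (q.1 : R)) * hf' + (f * (q.2 : R)) * he'
          + (1 - e) * hv⟩,
     ⟨f * (q.1 : R), by
        have hf' : f * f = f := hf
        refine (mem_span_idem hf).2 ?_
        linear_combination (q.1 : R) * hf'⟩)
  map_add' p q := by
    refine Prod.ext (Subtype.ext ?_) (Subtype.ext ?_) <;>
      simp only [Submodule.coe_add, Prod.fst_add, Prod.snd_add] <;> ring
  map_smul' r p := by
    refine Prod.ext (Subtype.ext ?_) (Subtype.ext ?_) <;>
      simp only [Submodule.coe_smul, Prod.smul_fst, Prod.smul_snd, smul_eq_mul,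
        RingHom.id_apply] <;> ring
  left_inv p := by
    have hx : e * (p.1 : R) = p.1 := (mem_span_idem he).1 p.1.2
    have hy : f * (p.2 : R) = p.2 := (mem_span_idem hf).1 p.2.2
    have hf' : f * f = f := hf
    refine Prod.ext (Subtype.ext ?_) (Subtype.ext ?_)
    · show (p.2 : R) + (p.1 : R) - f * (p.1 : R) - f * ((p.2 : R) + (p.1 : R) - f * (p.1 : R))
        + f * (p.1 : R) = (p.1 : R)
      linear_combination (p.1 : R) * hf' - hy
    · show f * ((p.2 : R) + (p.1 : R) - f * (p.1 : R)) = (p.2 : R)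
      linear_combination hy - (p.1 : R) * hf'
  right_inv q := by
    have hu : (e + f - e * f) * (q.1 : R) = q.1 := (mem_span_idem (he.add_sub_mul hf)).1 q.1.2
    have hv : (e * f) * (q.2 : R) = q.2 := (mem_span_idem (imul_idem he hf)).1 q.2.2
    have he' : e * e = e := he
    have hf' : f * f = f := hf
    refine Prod.ext (Subtype.ext ?_) (Subtype.ext ?_)
    · show f * (q.1 : R) + ((q.1 : R) - f * (q.1 : R) + (q.2 : R))
        - f * ((q.1 : R) - f * (q.1 : R) + (q.2 : R)) = (q.1 : R)
      linear_combination ((q.1 : R) - e * (q.2 : R)) * hf' - (1 - f) * hv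
    · show f * ((q.1 : R) - f * (q.1 : R) + (q.2 : R)) = (q.2 : R)
      linear_combination (e * (q.2 : R) - (q.1 : R)) * hf' + (1 - f) * hv
end Swap

section Pl
variable {R : Type u} [CommRing R]

/-- The iterated product `e₁R × e₂R × ⋯ × eₖR`. -/
def Pl : List R → Type u
  | [] => PUnit
  | e :: l => ↥(Ideal.span ({e} : Set R)) × Pl l

def PlAddCommGroup : (l : List R) → AddCommGroup (Pl l)
  | [] => inferInstanceAs (AddCommGroup PUnit)
  | e :: l =>
    letI := PlAddCommGroup l
    inferInstanceAs (AddCommGroup (↥(Ideal.span ({e} : Set R)) × Pl l))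

noncomputable instance (l : List R) : AddCommGroup (Pl l) := PlAddCommGroup l

def PlModule : (l : List R) → Module R (Pl l)
  | [] => (inferInstance : Module R PUnit.{u+1})
  | e :: l =>
    letI := PlModule l
    inferInstanceAs (Module R (↥(Ideal.span ({e} : Set R)) × Pl l))

noncomputable instance (l : List R) : Module R (Pl l) := PlModule l

instance : Subsingleton (Pl ([] : List R)) := inferInstanceAs (Subsingleton PUnit)

/-- Insert an idempotent into a chain. -/
def ins (e : R) : List R → List R
  | [] => [e]
  | f :: l => isup e f :: ins (e * f) l

def sortL : List R → List R
  | [] => []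
  | e :: l => ins e (sortL l)

lemma ins_idem {e : R} (he : IsIdempotentElem e) {l : List R}
    (hl : ∀ x ∈ l, IsIdempotentElem x) : ∀ x ∈ ins e l, IsIdempotentElem x := by
  induction l generalizing e with
  | nil => intro x hx; simp only [ins, List.mem_singleton] at hx; subst hx; exact he
  | cons f l ih =>
    intro x hx
    have hf := hl f (List.mem_cons_self)
    rcases List.mem_cons.1 hx with h | h
    · subst h; exact isup_idem he hf
    · exact ih (imul_idem he hf) (fun y hy => hl y (List.mem_cons_of_mem f hy)) x h

lemma sortL_idem {l : List R} (hl : ∀ x ∈ l, IsIdempotentElem x) :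
    ∀ x ∈ sortL l, IsIdempotentElem x := by
  induction l with
  | nil => intro x hx; simp [sortL] at hx
  | cons e l ih =>
    exact ins_idem (hl e (List.mem_cons_self))
      (ih fun y hy => hl y (List.mem_cons_of_mem e hy))

lemma mem_ins_le {g e : R} (he : IsIdempotentElem e) {l : List R}
    (hl : ∀ x ∈ l, IsIdempotentElem x)
    (hge : iord g e) (hgl : ∀ x ∈ l, iord g x) : ∀ y ∈ ins e l, iord g y := by
  induction l generalizing e with
  | nil => intro y hy; simp only [ins, List.mem_singleton] at hy; subst hy; exact hge
  | cons f l ih =>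
    intro y hy
    have hf := hl f (List.mem_cons_self)
    rcases List.mem_cons.1 hy with h | h
    · subst h; exact iord_isup_lub hge (hgl f (List.mem_cons_self))
    · exact ih (imul_idem he hf) (fun x hx => hl x (List.mem_cons_of_mem f hx))
        (iord_trans hge (iord_imul_left he))
        (fun x hx => hgl x (List.mem_cons_of_mem f hx)) y h

lemma pairwise_ins {e : R} (he : IsIdempotentElem e) {l : List R}
    (hl : ∀ x ∈ l, IsIdempotentElem x) (hp : List.Pairwise iord l) :
    List.Pairwise iord (ins e l) := by
  induction l generalizing e with
  | nil => simp [ins]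
  | cons f l ih =>
    have hf := hl f (List.mem_cons_self)
    have hl' : ∀ x ∈ l, IsIdempotentElem x := fun y hy => hl y (List.mem_cons_of_mem f hy)
    rcases List.pairwise_cons.1 hp with ⟨hfl, hp'⟩
    refine List.pairwise_cons.2 ⟨?_, ih (imul_idem he hf) hl' hp'⟩
    intro y hy
    refine mem_ins_le (imul_idem he hf) hl' ?_ ?_ y hy
    · exact iord_trans (iord_isup_left he) (iord_imul_left he)
    · intro x hx
      exact iord_trans (iord_isup_right hf) (hfl x hx)

lemma pairwise_sortL {l : List R} (hl : ∀ x ∈ l, IsIdempotentElem x) :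
    List.Pairwise iord (sortL l) := by
  induction l with
  | nil => simp [sortL]
  | cons e l ih =>
    exact pairwise_ins (hl e (List.mem_cons_self))
      (sortL_idem fun y hy => hl y (List.mem_cons_of_mem e hy))
      (ih fun y hy => hl y (List.mem_cons_of_mem e hy))

/-- `Pl` respects cons-equivalence. -/
noncomputable def plCons (e : R) {l l' : List R} (h : Pl l ≃ₗ[R] Pl l') :
    Pl (e :: l) ≃ₗ[R] Pl (e :: l') :=
  (LinearEquiv.refl R ↥(Ideal.span ({e} : Set R))).prodCongr h

noncomputable def plInsEquiv (e : R) (he : IsIdempotentElem e) :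
    (l : List R) → (∀ x ∈ l, IsIdempotentElem x) → (Pl (e :: l) ≃ₗ[R] Pl (ins e l))
  | [], _ => LinearEquiv.refl R _
  | f :: l, hl => by
    have hf := hl f (List.mem_cons_self)
    have hl' : ∀ x ∈ l, IsIdempotentElem x := fun y hy => hl y (List.mem_cons_of_mem f hy)
    exact ((LinearEquiv.prodAssoc R _ _ _).symm.trans
      (((swapEquiv he hf).prodCongr (LinearEquiv.refl R (Pl l))).trans
        (LinearEquiv.prodAssoc R _ _ _))).trans
      (plCons (isup e f) (plInsEquiv (e * f) (imul_idem he hf) l hl'))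

noncomputable def plSortEquiv : (l : List R) → (∀ x ∈ l, IsIdempotentElem x) →
    (Pl l ≃ₗ[R] Pl (sortL l))
  | [], _ => LinearEquiv.refl R _
  | e :: l, hl => by
    have he := hl e (List.mem_cons_self)
    have hl' : ∀ x ∈ l, IsIdempotentElem x := fun y hy => hl y (List.mem_cons_of_mem e hy)
    exact (plCons e (plSortEquiv l hl')).trans
      (plInsEquiv e he (sortL l) (sortL_idem hl'))

end Pl

section Loc
variable {R : Type u} [CommRing R] (S : Submonoid R)
variable (A : Type u) [CommRing A] [Algebra R A] [IsLocalization S A]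

/-- An `R`-linear equivalence of `A`-modules is `A`-linear, for `A` a localization. -/
noncomputable def extendEquiv {M N : Type*}
    [AddCommMonoid M] [Module R M] [Module A M] [IsScalarTower R A M]
    [AddCommMonoid N] [Module R N] [Module A N] [IsScalarTower R A N]
    (f : M ≃ₗ[R] N) : M ≃ₗ[A] N :=
  LinearEquiv.ofLinear (f.toLinearMap.extendScalarsOfIsLocalization S A)
    (f.symm.toLinearMap.extendScalarsOfIsLocalization S A)
    (by ext x; simp) (by ext x; simp)

/-- Localization of an isomorphism. -/
noncomputable def locEquiv {M N : Type u}
    [AddCommGroup M] [Module R M] [AddCommGroup N] [Module R N] (f : M ≃ₗ[R] N) :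
    LocalizedModule S M ≃ₗ[Localization S] LocalizedModule S N := by
  refine extendEquiv S (Localization S) (LinearEquiv.ofLinear
    (IsLocalizedModule.map S (LocalizedModule.mkLinearMap S M)
      (LocalizedModule.mkLinearMap S N) f.toLinearMap)
    (IsLocalizedModule.map S (LocalizedModule.mkLinearMap S N)
      (LocalizedModule.mkLinearMap S M) f.symm.toLinearMap) ?_ ?_) <;>
  · apply LinearMap.ext
    intro x
    induction x using LocalizedModule.induction_on with
    | h m s => simp [IsLocalizedModule.map_LocalizedModules]

instance prodMap_isLocalizedModule {M M' N N' : Type*}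
    [AddCommMonoid M] [Module R M] [AddCommMonoid M'] [Module R M']
    [AddCommMonoid N] [Module R N] [AddCommMonoid N'] [Module R N']
    (f : M →ₗ[R] M') (g : N →ₗ[R] N') [IsLocalizedModule S f] [IsLocalizedModule S g] :
    IsLocalizedModule S (f.prodMap g) where
  map_units s := by
    rw [Module.End.isUnit_iff]
    have hf := (Module.End.isUnit_iff _).1 (IsLocalizedModule.map_units f s)
    have hg := (Module.End.isUnit_iff _).1 (IsLocalizedModule.map_units g s)
    have : ⇑(algebraMap R (Module.End R (M' × N')) s) =
        Prod.map (⇑(algebraMap R (Module.End R M') s)) (⇑(algebraMap R (Module.End R N') s)) := by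
      funext p; rfl
    rw [this]
    exact hf.prodMap hg
  surj := by
    rintro ⟨x, y⟩
    obtain ⟨⟨m, s⟩, hm⟩ := IsLocalizedModule.surj S f x
    obtain ⟨⟨n, t⟩, hn⟩ := IsLocalizedModule.surj S g y
    simp only [Submonoid.smul_def] at hm hn
    refine ⟨⟨(t • m, s • n), s * t⟩, Prod.ext ?_ ?_⟩
    · show (s * t) • x = f (t • m)
      simp only [Submonoid.smul_def, Submonoid.coe_mul, map_smul, ← hm]
      rw [mul_comm, mul_smul]
    · show (s * t) • y = g (s • n)
      simp only [Submonoid.smul_def, Submonoid.coe_mul, map_smul, ← hn]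
      rw [mul_smul]
  exists_of_eq := by
    rintro ⟨x₁, y₁⟩ ⟨x₂, y₂⟩ h
    obtain ⟨c₁, hc₁⟩ := IsLocalizedModule.exists_of_eq (S := S) (f := f) (congrArg Prod.fst h)
    obtain ⟨c₂, hc₂⟩ := IsLocalizedModule.exists_of_eq (S := S) (f := g) (congrArg Prod.snd h)
    simp only [LinearMap.fst_apply, LinearMap.snd_apply] at hc₁ hc₂
    refine ⟨c₁ * c₂, Prod.ext ?_ ?_⟩
    · show (c₁ * c₂) • x₁ = (c₁ * c₂) • x₂
      rw [mul_comm, mul_smul, mul_smul, hc₁]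
    · show (c₁ * c₂) • y₁ = (c₁ * c₂) • y₂
      rw [mul_smul, mul_smul, hc₂]

/-- Localization commutes with binary products. -/
noncomputable def locProd (M N : Type u) [AddCommGroup M] [Module R M]
    [AddCommGroup N] [Module R N] :
    LocalizedModule S (M × N) ≃ₗ[Localization S]
      (LocalizedModule S M × LocalizedModule S N) :=
  extendEquiv S (Localization S)
    (IsLocalizedModule.iso S
      ((LocalizedModule.mkLinearMap S M).prodMap (LocalizedModule.mkLinearMap S N)))

/-- Localization of `R` itself. -/
noncomputable def locSelf : LocalizedModule S R ≃ₗ[Localization S] Localization S :=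
  extendEquiv S (Localization S)
    (IsLocalizedModule.iso S (Algebra.linearMap R (Localization S)))

end Loc

section LocSpan
variable {R : Type u} [CommRing R] (P : Ideal R) [hP : P.IsPrime]

lemma loc_span_subsingleton {e : R} (he : IsIdempotentElem e) (heP : e ∈ P) :
    Subsingleton (LocalizedModule P.primeCompl ↥(Ideal.span ({e} : Set R))) := by
  refine subsingleton_of_forall_eq 0 fun z => ?_
  induction z using LocalizedModule.induction_on with
  | h x s =>
    have h1e : (1 - e) ∈ P.primeCompl := by
      intro h
      exact hP.ne_top (Ideal.eq_top_of_isUnit_mem P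
        (by simpa using P.add_mem h heP) isUnit_one)
    have hx : e * (x : R) = x := (mem_span_idem he).1 x.2
    have : (⟨1 - e, h1e⟩ : P.primeCompl) • x = 0 := by
      refine Subtype.ext ?_
      show (1 - e) • (x : R) = 0
      rw [smul_eq_mul]
      linear_combination -hx
    calc LocalizedModule.mk x s = LocalizedModule.mk ((⟨1 - e, h1e⟩ : P.primeCompl) • x)
          (⟨1 - e, h1e⟩ * s) := (LocalizedModule.mk_cancel_common_left _ s x).symm
      _ = 0 := by rw [this, LocalizedModule.zero_mk]

lemma loc_pl_nil_subsingleton :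
    Subsingleton (LocalizedModule P.primeCompl (Pl ([] : List R))) := by
  refine subsingleton_of_forall_eq 0 fun z => ?_
  induction z using LocalizedModule.induction_on with
  | h x s => rw [Subsingleton.elim x 0, LocalizedModule.zero_mk]

lemma isLocalizedModule_span {e : R} (he : IsIdempotentElem e) (heP : e ∉ P) :
    IsLocalizedModule P.primeCompl
      ((Algebra.linearMap R (Localization P.primeCompl)).comp
        (Submodule.subtype (Ideal.span ({e} : Set R)))) := by
  set A := Localization P.primeCompl
  constructor
  · exact IsLocalizedModule.map_units (Algebra.linearMap R A)
  · intro z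
    obtain ⟨⟨r, s⟩, hz⟩ := IsLocalization.surj P.primeCompl (S := A) z
    have he' : e * e = e := he
    have hre : (r * e) ∈ Ideal.span ({e} : Set R) :=
      (mem_span_idem he).2 (by linear_combination r * he')
    have hse : (s : R) * e ∈ P.primeCompl := by
      intro h
      rcases hP.mem_or_mem h with h | h
      · exact s.2 h
      · exact heP h
    refine ⟨⟨⟨r * e, hre⟩, ⟨(s : R) * e, hse⟩⟩, ?_⟩
    show (⟨(s : R) * e, hse⟩ : P.primeCompl) • z = algebraMap R A (r * e)
    rw [Submonoid.smul_def, Algebra.smul_def, map_mul, map_mul]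
    calc algebraMap R A (s : R) * algebraMap R A e * z
        = algebraMap R A e * (z * algebraMap R A (s : R)) := by ring
      _ = algebraMap R A e * algebraMap R A r := by rw [hz]
      _ = algebraMap R A r * algebraMap R A e := mul_comm _ _
  · intro x y h
    obtain ⟨c, hc⟩ := IsLocalization.exists_of_eq (M := P.primeCompl) (S := A) h
    exact ⟨c, Subtype.ext (by simpa [Submonoid.smul_def, smul_eq_mul] using hc)⟩

noncomputable def locSpanEquiv {e : R} (he : IsIdempotentElem e) (heP : e ∉ P) :
    LocalizedModule P.primeCompl ↥(Ideal.span ({e} : Set R)) ≃ₗ[Localization P.primeCompl]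
      Localization P.primeCompl :=
  letI := isLocalizedModule_span P he heP
  extendEquiv P.primeCompl (Localization P.primeCompl)
    (IsLocalizedModule.iso P.primeCompl
      ((Algebra.linearMap R (Localization P.primeCompl)).comp
        (Submodule.subtype (Ideal.span ({e} : Set R)))))

open Classical in
noncomputable def cnt (P : Ideal R) : List R → ℕ
  | [] => 0
  | e :: l => cnt P l + (if e ∈ P then 0 else 1)

noncomputable def subsingletonProdEquiv (A Z T : Type*) [CommRing A] [AddCommGroup Z] [Module A Z]
    [AddCommGroup T] [Module A T] [Subsingleton Z] : (Z × T) ≃ₗ[A] T :=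
  LinearEquiv.ofLinear (LinearMap.snd A Z T) (LinearMap.prod 0 LinearMap.id)
    (by apply LinearMap.ext; intro t; rfl)
    (by apply LinearMap.ext; intro p; exact Prod.ext (Subsingleton.elim _ _) rfl)

noncomputable def plUncons (e : R) (l : List R) :
    Pl (e :: l) ≃ₗ[R] (↥(Ideal.span ({e} : Set R)) × Pl l) :=
  LinearEquiv.refl R (Pl (e :: l))

lemma loc_pl_free : ∀ (l : List R), (∀ x ∈ l, IsIdempotentElem x) →
    Nonempty (LocalizedModule P.primeCompl (Pl l) ≃ₗ[Localization P.primeCompl]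
      (Fin (cnt P l) → Localization P.primeCompl)) := by
  intro l
  induction l with
  | nil =>
    intro _
    haveI := loc_pl_nil_subsingleton P (R := R)
    haveI : Subsingleton (Fin (cnt P ([] : List R)) → Localization P.primeCompl) :=
      ⟨fun a b => funext fun i => by
        have : cnt P ([] : List R) = 0 := rfl
        exact absurd i.2 (by omega)⟩
    exact ⟨LinearEquiv.ofSubsingleton _ _⟩
  | cons e l ih =>
    intro hl
    have he := hl e (List.mem_cons_self)
    obtain ⟨g⟩ := ih fun x hx => hl x (List.mem_cons_of_mem e hx)
    set A := Localization P.primeCompl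
    have base : LocalizedModule P.primeCompl (Pl (e :: l)) ≃ₗ[A]
        (LocalizedModule P.primeCompl ↥(Ideal.span ({e} : Set R)) ×
          LocalizedModule P.primeCompl (Pl l)) :=
      (locEquiv P.primeCompl (plUncons e l)).trans
        (locProd P.primeCompl ↥(Ideal.span ({e} : Set R)) (Pl l))
    by_cases heP : e ∈ P
    · have hcnt : cnt P (e :: l) = cnt P l := by simp [cnt, heP]
      rw [hcnt]
      haveI := loc_span_subsingleton P he heP
      exact ⟨base.trans ((subsingletonProdEquiv A _ _).trans g)⟩
    · have hcnt : cnt P (e :: l) = cnt P l + 1 := by simp [cnt, heP]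
      rw [hcnt]
      exact ⟨base.trans (((locSpanEquiv P he heP).prodCongr g).trans (piSplit A (cnt P l)).symm)⟩

end LocSpan

section Decomp
variable {R : Type u} [CommRing R]

/-- A f.g. projective module is a direct summand of a finite free module. -/
lemma exists_compl (M : Type u) [AddCommGroup M] [Module R M]
    [Module.Finite R M] [Module.Projective R M] :
    ∃ (n : ℕ) (K : Type u) (_ : AddCommGroup K) (_ : Module R K) (_ : Module.Finite R K)
      (_ : Module.Projective R K), Nonempty ((M × K) ≃ₗ[R] (Fin n → R)) := by
  obtain ⟨n, f, hf⟩ := Module.Finite.exists_fin' R M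
  obtain ⟨σ, hσ⟩ := Module.projective_lifting_property f LinearMap.id hf
  have hfσ : ∀ y, f (σ y) = y := fun y => by simpa using LinearMap.congr_fun hσ y
  set p : (Fin n → R) →ₗ[R] (Fin n → R) := LinearMap.id - σ.comp f with hp
  have hker : ∀ x, p x ∈ LinearMap.ker f := by
    intro x
    simp only [hp, LinearMap.mem_ker, LinearMap.sub_apply, LinearMap.id_apply, map_sub,
      LinearMap.coe_comp, Function.comp_apply, hfσ]
    exact sub_self _
  let E : (M × ↥(LinearMap.ker f)) ≃ₗ[R] (Fin n → R) := LinearEquiv.ofLinear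
    (σ.comp (LinearMap.fst R M (LinearMap.ker f)) +
      (Submodule.subtype (LinearMap.ker f)).comp (LinearMap.snd R M (LinearMap.ker f)))
    (LinearMap.prod f (LinearMap.codRestrict (LinearMap.ker f) p hker))
    (by
      apply LinearMap.ext
      intro x
      simp only [LinearMap.coe_comp, Function.comp_apply, LinearMap.add_apply, LinearMap.prod_apply,
        Function.prod, LinearMap.fst_apply, LinearMap.snd_apply, LinearMap.codRestrict_apply,
        Submodule.coe_subtype, hp, LinearMap.sub_apply, LinearMap.id_apply, LinearMap.id_coe, id_eq]
      abel)
    (by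
      apply LinearMap.ext
      rintro ⟨m, k⟩
      have hfk : f k.1 = 0 := k.2
      refine Prod.ext ?_ (Subtype.ext ?_)
      · simp [hfσ, hfk]
      · simp [hp, hfσ, hfk])
  haveI : Module.Finite R ↥(LinearMap.ker f) := by
    refine Module.Finite.of_surjective ((LinearMap.snd R M _).comp E.symm.toLinearMap) ?_
    rw [LinearMap.coe_comp]
    exact Function.Surjective.comp (fun k => ⟨(0, k), rfl⟩) E.symm.surjective
  haveI : Module.Projective R ↥(LinearMap.ker f) := by
    refine Module.Projective.of_split (M := (Fin n → R))
      (E.toLinearMap.comp (LinearMap.inr R M _))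
      ((LinearMap.snd R M _).comp E.symm.toLinearMap) ?_
    apply LinearMap.ext
    intro k
    simp
  exact ⟨n, ↥(LinearMap.ker f), inferInstance, inferInstance, inferInstance, inferInstance, ⟨E⟩⟩

end Decomp

section Cyclic
variable {R : Type u} [CommRing R]

lemma cyclic_of_summand {X Y : Type u} [AddCommGroup X] [Module R X] [AddCommGroup Y] [Module R Y]
    (φ : (X × Y) ≃ₗ[R] R) :
    ∃ e : R, IsIdempotentElem e ∧ Nonempty (X ≃ₗ[R] ↥(Ideal.span ({e} : Set R))) := by
  set p := φ.symm 1 with hpdef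
  set e := φ (p.1, 0) with hedef
  set e' := φ (0, p.2) with he'def
  have hsum : e + e' = 1 := by
    rw [hedef, he'def, ← map_add]
    have h1 : (p.1, (0 : Y)) + ((0 : X), p.2) = p := by
      refine Prod.ext ?_ ?_ <;> simp
    rw [h1, hpdef]
    exact φ.apply_symm_apply 1
  have hxp : ∀ x : X, (x, (0 : Y)) = φ (x, 0) • p := by
    intro x
    have : φ.symm (φ (x, 0) • (1 : R)) = φ (x, 0) • φ.symm 1 := map_smul φ.symm _ _
    rw [smul_eq_mul, mul_one, φ.symm_apply_apply] at this
    exact this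
  have key : ∀ x : X, φ (x, 0) * e' = 0 := by
    intro x
    have hsnd : φ (x, 0) • p.2 = 0 := (congrArg Prod.snd (hxp x)).symm
    calc φ (x, 0) * e' = φ (x, 0) • φ (0, p.2) := by rw [smul_eq_mul]
      _ = φ (φ (x, 0) • ((0 : X), p.2)) := (map_smul φ _ _).symm
      _ = φ (0, φ (x, 0) • p.2) := by rw [Prod.smul_mk, smul_zero]
      _ = 0 := by rw [hsnd, Prod.mk_zero_zero, map_zero]
  have he'0 : e * e' = 0 := key p.1
  have he : IsIdempotentElem e := by
    show e * e = e
    linear_combination e * hsum - he'0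
  let j : X →ₗ[R] R := (φ : (X × Y) →ₗ[R] R).comp (LinearMap.inl R X Y)
  have hj : ∀ x, j x = φ (x, 0) := fun x => rfl
  have hinj : Function.Injective j := by
    intro a b hab
    have h2 : φ (a, (0 : Y)) = φ (b, 0) := by rw [← hj, ← hj]; exact hab
    exact congrArg Prod.fst (φ.injective h2)
  have hrange : LinearMap.range j = Ideal.span ({e} : Set R) := by
    apply le_antisymm
    · rintro _ ⟨x, rfl⟩
      refine (mem_span_idem he).2 ?_
      rw [hj]
      linear_combination (φ (x, 0)) * hsum - key x
    · intro z hz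
      obtain ⟨c, rfl⟩ := Ideal.mem_span_singleton'.1 hz
      refine ⟨c • p.1, ?_⟩
      have h3 : ((c • p.1 : X), (0 : Y)) = c • (p.1, (0 : Y)) := by
        rw [Prod.smul_mk, smul_zero]
      rw [hj, h3, map_smul, smul_eq_mul]
  exact ⟨e, he, ⟨(LinearEquiv.ofInjective j hinj).trans (LinearEquiv.ofEq _ _ hrange)⟩⟩

theorem decomp_refinement (hR : IsRefinementRing R) :
    ∀ (n : ℕ) (X Y : Type u) (_ : AddCommGroup X) (_ : Module R X) (_ : AddCommGroup Y)
      (_ : Module R Y) (_ : Module.Finite R X) (_ : Module.Projective R X)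
      (_ : Module.Finite R Y) (_ : Module.Projective R Y),
      Nonempty ((X × Y) ≃ₗ[R] (Fin n → R)) →
      ∃ l : List R, (∀ x ∈ l, IsIdempotentElem x) ∧ Nonempty (X ≃ₗ[R] Pl l) := by
  intro n
  induction n with
  | zero =>
    intro X Y _ _ _ _ _ _ _ _ hE
    obtain ⟨E⟩ := hE
    haveI : Subsingleton (Fin 0 → R) := ⟨fun a b => funext fun i => i.elim0⟩
    haveI : Subsingleton (X × Y) := E.toEquiv.subsingleton
    haveI : Subsingleton X :=
      ⟨fun a b => congrArg Prod.fst (Subsingleton.elim (a, (0 : Y)) (b, (0 : Y)))⟩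
    exact ⟨[], by simp, ⟨LinearEquiv.ofSubsingleton _ _⟩⟩
  | succ n ih =>
    intro X Y _ _ _ _ _ _ _ _ hE
    obtain ⟨E⟩ := hE
    have E2 : (X × Y) ≃ₗ[R] (R × (Fin n → R)) := E.trans (piSplit R n)
    obtain ⟨E₁₁, E₁₂, E₂₁, E₂₂, hE11, hE12, hE21, hE22, ⟨hX⟩, -, ⟨hC⟩, ⟨hD⟩⟩ :=
      hR (ModuleCat.of R X) (ModuleCat.of R Y) (ModuleCat.of R R)
        (ModuleCat.of R (Fin n → R)) (by exact ‹Module.Finite R X›)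
        (by exact ‹Module.Projective R X›) (by exact ‹Module.Finite R Y›)
        (by exact ‹Module.Projective R Y›) (by exact inferInstanceAs (Module.Finite R R))
        (by exact inferInstanceAs (Module.Projective R R))
        (by exact inferInstanceAs (Module.Finite R (Fin n → R)))
        (by exact inferInstanceAs (Module.Projective R (Fin n → R))) (by exact ⟨E2⟩)
    obtain ⟨e, he, ⟨h11⟩⟩ := cyclic_of_summand (R := R) (X := E₁₁) (Y := E₂₁) hC.symm
    obtain ⟨l, hl, ⟨h12⟩⟩ := ih E₁₂ E₂₂ inferInstance inferInstance inferInstance inferInstance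
      hE12.1 hE12.2 hE22.1 hE22.2 ⟨hD.symm⟩
    refine ⟨e :: l, ?_, ⟨(hX.trans (h11.prodCongr h12)).trans (plUncons e l).symm⟩⟩
    intro x hx
    rcases List.mem_cons.1 hx with h | h
    · subst h; exact he
    · exact hl x h
end Cyclic

section Uniq
variable {R : Type u} [CommRing R]

lemma idem_eq_zero_of_nilpotent {a : R} (ha : IsIdempotentElem a) (h : IsNilpotent a) : a = 0 := by
  obtain ⟨n, hn⟩ := h
  cases n with
  | zero =>
    have h1 : (1 : R) = 0 := by simpa using hn
    rw [← mul_one a, h1, mul_zero]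
  | succ n =>
    rw [ha.pow_succ_eq] at hn
    exact hn

lemma idem_mul_eq_of_mem {e f : R} (he : IsIdempotentElem e) (hf : IsIdempotentElem f)
    (h : ∀ P : Ideal R, P.IsPrime → f ∈ P → e ∈ P) : e * f = e := by
  have he' : e * e = e := he
  have hf' : f * f = f := hf
  have ha : IsIdempotentElem (e - e * f) := by
    show (e - e * f) * (e - e * f) = e - e * f
    linear_combination (1 - 2 * f + f * f) * he' + e * hf'
  have hmem : ∀ P : Ideal R, P.IsPrime → (e - e * f) ∈ P := by
    intro P hP
    by_cases heP : e ∈ P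
    · exact P.sub_mem heP (Ideal.mul_mem_right f P heP)
    · have hfP : f ∉ P := fun hfP => heP (h P hP hfP)
      have h1f : (1 - f) ∈ P := by
        have h0 : f * (1 - f) ∈ P := by
          have : f * (1 - f) = 0 := by linear_combination -hf'
          rw [this]; exact P.zero_mem
        rcases hP.mem_or_mem h0 with h | h
        · exact absurd h hfP
        · exact h
      have : e - e * f = e * (1 - f) := by ring
      rw [this]
      exact Ideal.mul_mem_left P e h1f
  have hnil : IsNilpotent (e - e * f) := nilpotent_iff_mem_prime.2 hmem
  have := idem_eq_zero_of_nilpotent ha hnil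
  linear_combination -this

lemma idem_eq_of_prime_iff {e f : R} (he : IsIdempotentElem e) (hf : IsIdempotentElem f)
    (h : ∀ P : Ideal R, P.IsPrime → (e ∈ P ↔ f ∈ P)) : e = f := by
  have h1 := idem_mul_eq_of_mem he hf fun P hP hfP => (h P hP).2 hfP
  have h2 := idem_mul_eq_of_mem hf he fun P hP hfP => (h P hP).1 hfP
  linear_combination h2 - h1

lemma mem_of_cnt_eq_zero {P : Ideal R} {l : List R} (h : cnt P l = 0) :
    ∀ x ∈ l, x ∈ P := by
  classical
  induction l with
  | nil => intro x hx; simp at hx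
  | cons e l ih =>
    intro x hx
    rw [cnt] at h
    by_cases heP : e ∈ P
    · rw [if_pos heP, add_zero] at h
      rcases List.mem_cons.1 hx with hh | hh
      · subst hh; exact heP
      · exact ih h x hh
    · rw [if_neg heP] at h; omega

lemma cnt_cons_of_mem {P : Ideal R} {e : R} (l : List R) (heP : e ∈ P) :
    cnt P (e :: l) = cnt P l := by
  classical
  rw [cnt, if_pos heP, add_zero]

lemma cnt_cons_of_not_mem {P : Ideal R} {e : R} (l : List R) (heP : e ∉ P) :
    cnt P (e :: l) = cnt P l + 1 := by
  classical
  rw [cnt, if_neg heP]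

lemma cnt_eq_zero_of_forall_mem {P : Ideal R} {l : List R} (h : ∀ x ∈ l, x ∈ P) :
    cnt P l = 0 := by
  induction l with
  | nil => rfl
  | cons e l ih =>
    rw [cnt_cons_of_mem l (h e (List.mem_cons_self))]
    exact ih fun x hx => h x (List.mem_cons_of_mem e hx)

lemma subsingleton_pl {l : List R} (h : ∀ x ∈ l, x = (0 : R)) : Subsingleton (Pl l) := by
  induction l with
  | nil => infer_instance
  | cons e l ih =>
    haveI := ih fun x hx => h x (List.mem_cons_of_mem e hx)
    have he0 : e = 0 := h e (List.mem_cons_self)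
    haveI : Subsingleton ↥(Ideal.span ({e} : Set R)) := by
      refine ⟨fun a b => Subtype.ext ?_⟩
      obtain ⟨c, hc⟩ := Ideal.mem_span_singleton'.1 a.2
      obtain ⟨d, hd⟩ := Ideal.mem_span_singleton'.1 b.2
      rw [← hc, ← hd, he0, mul_zero, mul_zero]
    exact inferInstanceAs (Subsingleton (↥(Ideal.span ({e} : Set R)) × Pl l))

lemma pl_zero_of_cnt_zero {l : List R} (hidem : ∀ x ∈ l, IsIdempotentElem x)
    (h : ∀ P : Ideal R, P.IsPrime → cnt P l = 0) : ∀ x ∈ l, x = (0 : R) := by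
  intro x hx
  refine idem_eq_zero_of_nilpotent (hidem x hx) (nilpotent_iff_mem_prime.2 ?_)
  intro P hP
  exact mem_of_cnt_eq_zero (h P hP) x hx

lemma pl_equiv_of_cnt :
    ∀ l₁ l₂ : List R, (∀ x ∈ l₁, IsIdempotentElem x) → (∀ x ∈ l₂, IsIdempotentElem x) →
      List.Pairwise iord l₁ → List.Pairwise iord l₂ →
      (∀ P : Ideal R, P.IsPrime → cnt P l₁ = cnt P l₂) →
      Nonempty (Pl l₁ ≃ₗ[R] Pl l₂) := by
  intro l₁
  induction l₁ with
  | nil =>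
    intro l₂ _ hi₂ _ _ hc
    haveI : Subsingleton (Pl l₂) :=
      subsingleton_pl (pl_zero_of_cnt_zero hi₂ fun P hP => ((hc P hP).symm.trans rfl))
    exact ⟨LinearEquiv.ofSubsingleton _ _⟩
  | cons e t₁ ih =>
    intro l₂ hi₁ hi₂ hp₁ hp₂ hc
    rcases l₂ with - | ⟨f, t₂⟩
    · haveI : Subsingleton (Pl (e :: t₁)) :=
        subsingleton_pl (pl_zero_of_cnt_zero hi₁ fun P hP => (hc P hP).trans rfl)
      exact ⟨LinearEquiv.ofSubsingleton _ _⟩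
    · have he := hi₁ e (List.mem_cons_self)
      have hf := hi₂ f (List.mem_cons_self)
      -- head characterization: e ∈ P ↔ cnt P (e::t₁) = 0 for chains
      have hhead : ∀ (P : Ideal R), P.IsPrime → ∀ (g : R) (t : List R), List.Pairwise iord (g :: t) →
          (g ∈ P ↔ cnt P (g :: t) = 0) := by
        intro P hP g t hpair
        constructor
        · intro hgP
          refine cnt_eq_zero_of_forall_mem ?_
          intro x hx
          rcases List.mem_cons.1 hx with hh | hh
          · subst hh; exact hgP
          · have hgx : g * x = x := (List.pairwise_cons.1 hpair).1 x hh
            rw [← hgx]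
            exact Ideal.mul_mem_right x P hgP
        · intro h0
          exact mem_of_cnt_eq_zero h0 g (List.mem_cons_self)
      have hef : e = f := by
        refine idem_eq_of_prime_iff he hf ?_
        intro P hP
        rw [hhead P hP e t₁ hp₁, hhead P hP f t₂ hp₂, hc P hP]
      subst hef
      have hct : ∀ P : Ideal R, P.IsPrime → cnt P t₁ = cnt P t₂ := by
        intro P hP
        have := hc P hP
        by_cases heP : e ∈ P
        · rw [cnt_cons_of_mem t₁ heP, cnt_cons_of_mem t₂ heP] at this; exact this
        · rw [cnt_cons_of_not_mem t₁ heP, cnt_cons_of_not_mem t₂ heP] at this; omega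
      obtain ⟨g⟩ := ih t₂ (fun x hx => hi₁ x (List.mem_cons_of_mem e hx))
        (fun x hx => hi₂ x (List.mem_cons_of_mem e hx))
        (List.pairwise_cons.1 hp₁).2 (List.pairwise_cons.1 hp₂).2 hct
      exact ⟨plCons e g⟩
end Uniq

/-- Two finitely generated projective modules over a commutative refinement ring are
isomorphic iff their localizations at every prime ideal are isomorphic as modules over
the localized ring. -/
theorem fg_proj_iso_iff_localization_prime_iso
    {R : Type u} [CommRing R] (hR : IsRefinementRing R)
    (M N : Type u) [AddCommGroup M] [Module R M] [AddCommGroup N] [Module R N]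
    [Module.Finite R M] [Module.Projective R M]
    [Module.Finite R N] [Module.Projective R N] :
    Nonempty (M ≃ₗ[R] N) ↔
      ∀ (P : Ideal R) [P.IsPrime],
        Nonempty (LocalizedModule P.primeCompl M ≃ₗ[Localization P.primeCompl]
          LocalizedModule P.primeCompl N) := by
  constructor
  · rintro ⟨g⟩ P _
    exact ⟨locEquiv P.primeCompl g⟩
  · intro h
    obtain ⟨n₁, K₁, iK₁, iK₁', iK₁f, iK₁p, ⟨EM⟩⟩ := exists_compl (R := R) M
    obtain ⟨n₂, K₂, iK₂, iK₂', iK₂f, iK₂p, ⟨EN⟩⟩ := exists_compl (R := R) N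
    obtain ⟨l₁, hl₁, ⟨dM⟩⟩ := decomp_refinement hR n₁ M K₁ inferInstance inferInstance iK₁ iK₁'
      inferInstance inferInstance iK₁f iK₁p ⟨EM⟩
    obtain ⟨l₂, hl₂, ⟨dN⟩⟩ := decomp_refinement hR n₂ N K₂ inferInstance inferInstance iK₂ iK₂'
      inferInstance inferInstance iK₂f iK₂p ⟨EN⟩
    have sM : M ≃ₗ[R] Pl (sortL l₁) := dM.trans (plSortEquiv l₁ hl₁)
    have sN : N ≃ₗ[R] Pl (sortL l₂) := dN.trans (plSortEquiv l₂ hl₂)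
    have hcnt : ∀ P : Ideal R, P.IsPrime → cnt P (sortL l₁) = cnt P (sortL l₂) := by
      intro P hP
      obtain ⟨gM⟩ := loc_pl_free P (sortL l₁) (sortL_idem hl₁)
      obtain ⟨gN⟩ := loc_pl_free P (sortL l₂) (sortL_idem hl₂)
      obtain ⟨hloc⟩ := h P
      haveI : Nontrivial (Localization P.primeCompl) :=
        (Localization.AtPrime.isLocalRing P).toNontrivial
      refine eq_of_fin_equiv (Localization P.primeCompl) ?_
      exact (gM.symm.trans ((locEquiv P.primeCompl sM.symm).trans
        (hloc.trans ((locEquiv P.primeCompl sN).trans gN))))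
    obtain ⟨g⟩ := pl_equiv_of_cnt (sortL l₁) (sortL l₂) (sortL_idem hl₁) (sortL_idem hl₂)
      (pairwise_sortL hl₁) (pairwise_sortL hl₂) hcnt
    exact ⟨(sM.trans g).trans sN.symm⟩
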